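/- Let S be a sharing abstraction over X and let s, t be terms with var(s) ∪ var(t) ⊆ X. If var(rel(s, S)) ∩ var(rel(t, S)) = ∅, then for every E ∈ γ_Sh(S) and every θ ∈ imgu(E), var(θ(s)) ∩ var(θ(t)) = ∅. -/
import Mathlib


open scoped Classical

namespace SharingPaper

/-- Finite first-order terms over an arity-indexed alphabet `F`, with
variables drawn from the countably infinite set `ℕ` (playing the role of `U`). -/
inductive Term (F : ℕ → Type) : Type
  | var : ℕ → Term F
  | app : (n : ℕ) → F n → (Fin n → Term F) → Term F

namespace Term

variable {F : ℕ → Type}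

/-- The set `var(t)` of variables occurring in a term. -/
def vars : Term F → Set ℕ
  | var x => {x}
  | app n _ ts => ⋃ i : Fin n, vars (ts i)

/-- Number of occurrences of the variable `x` in a term. -/
def count (x : ℕ) : Term F → ℕ
  | var y => if y = x then 1 else 0
  | app n _ ts => ∑ i : Fin n, count x (ts i)

/-- `χ(x, t) = min(2, number of occurrences of x in t)`. -/
def chiVar (x : ℕ) (t : Term F) : ℕ := min 2 (t.count x)

/-- `χ(t) = max {χ(x, t) | x ∈ U}`. -/
noncomputable def mult (t : Term F) : ℕ := sSup (Set.range fun x => chiVar x t)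

end Term

variable {F : ℕ → Type}

/-- Substitutions, represented as maps from variables to terms. -/
abbrev Subst (F : ℕ → Type) := ℕ → Term F

namespace Subst

/-- Homomorphic extension of a substitution to terms. -/
def apply (θ : Subst F) : Term F → Term F
  | .var x => θ x
  | .app n f ts => .app n f fun i => apply θ (ts i)

/-- `dom(θ) = {u | θ(u) ≠ u}`. -/
def dom (θ : Subst F) : Set ℕ := {x | θ x ≠ .var x}

/-- `rng(θ) = ∪ {var(θ(u)) | u ∈ dom(θ)}`. -/
def rng (θ : Subst F) : Set ℕ := ⋃ x ∈ dom θ, (θ x).vars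

/-- A genuine substitution has a finite domain. -/
def IsSubst (θ : Subst F) : Prop := (dom θ).Finite

/-- Composition: `(θ ∘ ψ)(u) = θ(ψ(u))`. -/
def comp (θ ψ : Subst F) : Subst F := fun x => θ.apply (ψ x)

/-- `θ` is idempotent iff `dom(θ) ∩ rng(θ) = ∅`. -/
def Idempotent (θ : Subst F) : Prop := dom θ ∩ rng θ = ∅

/-- `θ ≤ ψ` iff `ψ = δ ∘ θ` for some substitution `δ`. -/
def Le (θ ψ : Subst F) : Prop := ∃ δ : Subst F, IsSubst δ ∧ ψ = comp δ θ

/-- `occ(θ, y) = {u ∈ U | y ∈ var(θ(u))}`. -/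
def occ (θ : Subst F) (y : ℕ) : Set ℕ := {u | y ∈ (θ u).vars}

/-- `α_Sh(θ) = {occ(θ, u) ∩ X | u ∈ U}`. -/
def alphaSh (X : Set ℕ) (θ : Subst F) : Set (Set ℕ) :=
  Set.range fun u => occ θ u ∩ X

/-- An assignment `M ⊆ U` models `θ` iff for every `x ↦ t ∈ θ`, `x ∈ M ↔ var(t) ⊆ M`. -/
def Models (M : Set ℕ) (θ : Subst F) : Prop :=
  ∀ x ∈ dom θ, (x ∈ M ↔ (θ x).vars ⊆ M)

/-- `θ` satisfies a Pos abstraction `f` over `X` iff `M ∩ X ∈ f` for every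
assignment `M` that models `θ`. -/
def Satisfies (X : Set ℕ) (θ : Subst F) (f : Set (Set ℕ)) : Prop :=
  ∀ M : Set ℕ, Models M θ → M ∩ X ∈ f

end Subst

/-- The set of unifiers of a set of equations. -/
def unif (E : Set (Term F × Term F)) : Set (Subst F) :=
  {θ | Subst.IsSubst θ ∧ ∀ p ∈ E, θ.apply p.1 = θ.apply p.2}

/-- Most general unifiers. -/
def mgu (E : Set (Term F × Term F)) : Set (Subst F) :=
  {θ ∈ unif E | ∀ ψ ∈ unif E, Subst.Le θ ψ}

/-- Idempotent most general unifiers. -/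
def imgu (E : Set (Term F × Term F)) : Set (Subst F) :=
  {θ ∈ mgu E | Subst.Idempotent θ}

/-- `γ_Sh(S)`. -/
def gammaSh (X : Set ℕ) (S : Set (Set ℕ)) : Set (Set (Term F × Term F)) :=
  {E | E.Finite ∧ ∃ θ ∈ imgu E, Subst.alphaSh X θ ⊆ S}

/-- `γ_Fr(F)`. -/
def gammaFr (Fv : Set ℕ) : Set (Set (Term F × Term F)) :=
  {E | E.Finite ∧ ∃ θ ∈ imgu E, ∀ x ∈ Fv, ∃ y, θ x = Term.var y}

/-- `γ_Lin(L)`. -/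
def gammaLin (L : Set ℕ) : Set (Set (Term F × Term F)) :=
  {E | E.Finite ∧ ∃ θ ∈ imgu E, ∀ x ∈ L, (θ x).mult ≤ 1}

/-- `γ_Pos(f)`. -/
def gammaPos (X : Set ℕ) (f : Set (Set ℕ)) : Set (Set (Term F × Term F)) :=
  {E | E.Finite ∧ ∃ θ ∈ imgu E, Subst.Satisfies X θ f}

/-- `γ_SFL(S, F, L)`. -/
def gammaSFL (X : Set ℕ) (S : Set (Set ℕ)) (Fv L : Set ℕ) :
    Set (Set (Term F × Term F)) :=
  gammaSh X S ∩ gammaFr Fv ∩ gammaLin L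

/-- `var(S) = ∪ {G | G ∈ S}`. -/
def varS {α : Type*} (S : Set (Set α)) : Set α := ⋃ G ∈ S, G

/-- `rel(t, S) = {G ∈ S | var(t) ∩ G ≠ ∅}`. -/
def rel (t : Term F) (S : Set (Set ℕ)) : Set (Set ℕ) :=
  {G ∈ S | t.vars ∩ G ≠ ∅}

/-- Closure `S*`: the least superset of `S` closed under binary unions. -/
def closure {α : Type*} (S : Set (Set α)) : Set (Set α) :=
  ⋂₀ {S' | S ⊆ S' ∧ ∀ G1 ∈ S', ∀ G2 ∈ S', G1 ∪ G2 ∈ S'}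

/-- Pairwise union `S1 ⊎ S2`. -/
def pairUnion {α : Type*} (S1 S2 : Set (Set α)) : Set (Set α) :=
  {G | ∃ G1 ∈ S1, ∃ G2 ∈ S2, G = G1 ∪ G2}

/-- `S^{*F}`: the least superset `S'` of `S` such that `G1 ∪ G2 ∈ S'` whenever
`G1, G2 ∈ S'` and `G1 ∩ G2 ∩ F = ∅`. -/
def closureF {α : Type*} (Fv : Set α) (S : Set (Set α)) : Set (Set α) :=
  ⋂₀ {S' | S ⊆ S' ∧ ∀ G1 ∈ S', ∀ G2 ∈ S', G1 ∩ G2 ∩ Fv = ∅ → G1 ∪ G2 ∈ S'}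

/-- `S1 ⊎_F S2`. -/
def pairUnionF {α : Type*} (Fv : Set α) (S1 S2 : Set (Set α)) : Set (Set α) :=
  {G | ∃ G1 ∈ S1, ∃ G2 ∈ S2, (G1 ≠ G2 → G1 ∩ G2 ∩ Fv = ∅) ∧ G = G1 ∪ G2}

/-- The Filé decomposition `K_F(S)`. -/
def KF {α : Type*} (Fv : Set α) (S : Set (Set α)) : Set (Set (Set α)) :=
  {B | B ⊆ S ∧ Fv ⊆ varS B ∧
    ∀ G1 ∈ B, ∀ G2 ∈ B, G1 ≠ G2 → G1 ∩ G2 ∩ Fv = ∅}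

/-- Abstract multiplicity `χ(t, S, L)`. -/
noncomputable def chiA (t : Term F) (S : Set (Set ℕ)) (L : Set ℕ) : ℕ :=
  if (∃ x ∈ varS S, Term.chiVar x t = 2) ∨
     (∃ x ∈ varS S, x ∈ t.vars \ L) ∨
     (∃ G ∈ S, ∃ x ∈ t.vars, ∃ y ∈ t.vars, x ≠ y ∧ x ∈ G ∧ y ∈ G)
  then 2 else 1

/-- The term `t` is a variable belonging to the freeness set `Fv` ("t ∈ F"). -/
def IsFreeTerm (t : Term F) (Fv : Set ℕ) : Prop := ∃ x ∈ Fv, t = Term.var x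

/-- The term `t` is a variable ("t ∈ U"). -/
def IsVarTerm (t : Term F) : Prop := ∃ x, t = Term.var x


lemma mem_vars_apply {θ : Subst F} {u : Term F} {y : ℕ} :
    y ∈ (θ.apply u).vars ↔ ∃ x ∈ u.vars, y ∈ (θ x).vars := by
  induction u with
  | var x => simp [Subst.apply, Term.vars]
  | app n f ts ih =>
      simp only [Subst.apply, Term.vars, Set.mem_iUnion]
      constructor
      · rintro ⟨i, hi⟩
        obtain ⟨x, hx, hy⟩ := (ih i).mp hi
        exact ⟨x, ⟨i, hx⟩, hy⟩
      · rintro ⟨x, ⟨i, hxi⟩, hy⟩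
        exact ⟨i, (ih i).mpr ⟨x, hxi, hy⟩⟩

lemma apply_comp (δ θ : Subst F) (u : Term F) :
    (Subst.comp δ θ).apply u = δ.apply (θ.apply u) := by
  induction u with
  | var x => rfl
  | app n f ts ih => simp only [Subst.apply]; exact congrArg _ (funext ih)

/-- If `θ` is idempotent, every variable of `θ.apply u` is mapped to itself. -/
lemma idem_fix {θ : Subst F} (hid : Subst.Idempotent θ) {u : Term F} {z : ℕ}
    (hz : z ∈ (θ.apply u).vars) : θ z = Term.var z := by
  obtain ⟨x, _, hzx⟩ := mem_vars_apply.mp hz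
  by_cases hx : θ x = Term.var x
  · rw [hx] at hzx
    simp only [Term.vars, Set.mem_singleton_iff] at hzx
    subst hzx
    exact hx
  · by_contra hzz
    have hrng : z ∈ Subst.rng θ := Set.mem_biUnion hx hzx
    have : z ∈ Subst.dom θ ∩ Subst.rng θ := ⟨hzz, hrng⟩
    rw [hid] at this
    exact this

/-- the independence check is sound: if
`var(rel(s, S)) ∩ var(rel(t, S)) = ∅` then `var(θ(s)) ∩ var(θ(t)) = ∅`
for every `E ∈ γ_Sh(S)` and every `θ ∈ imgu(E)`. -/
theorem stmt5 {F : ℕ → Type} (X : Set ℕ) (hX : X.Finite)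
    (S : Set (Set ℕ)) (hS : ∅ ∈ S) (hSX : ∀ G ∈ S, G ⊆ X)
    (s t : Term F) (hst : s.vars ∪ t.vars ⊆ X)
    (hindep : varS (rel s S) ∩ varS (rel t S) = ∅) :
    ∀ E ∈ (gammaSh X S : Set (Set (Term F × Term F))), ∀ θ ∈ imgu E,
      (θ.apply s).vars ∩ (θ.apply t).vars = ∅ := by
  rintro E ⟨hEfin, θ', hθ', hα⟩ θ hθ
  obtain ⟨⟨hθ'u, hθ'min⟩, hθ'id⟩ := hθ'
  obtain ⟨⟨hθu, hθmin⟩, _⟩ := hθ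
  obtain ⟨δ, _, hδ⟩ := hθ'min θ hθu
  obtain ⟨δ', _, hδ'⟩ := hθmin θ' hθ'u
  -- key: a variable shared by θ'(s) and θ'(t) contradicts independence
  have stepA : ∀ z : ℕ, z ∈ (θ'.apply s).vars → z ∈ (θ'.apply t).vars → False := by
    intro z hzs hzt
    obtain ⟨x, hxs, hzx⟩ := mem_vars_apply.mp hzs
    obtain ⟨x', hxt, hzx'⟩ := mem_vars_apply.mp hzt
    have hG : Subst.occ θ' z ∩ X ∈ S := hα ⟨z, rfl⟩
    have hxG : x ∈ Subst.occ θ' z ∩ X := ⟨hzx, hst (Or.inl hxs)⟩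
    have hxG' : x' ∈ Subst.occ θ' z ∩ X := ⟨hzx', hst (Or.inr hxt)⟩
    have hGs : Subst.occ θ' z ∩ X ∈ rel s S :=
      ⟨hG, Set.nonempty_iff_ne_empty.mp ⟨x, hxs, hxG⟩⟩
    have hGt : Subst.occ θ' z ∩ X ∈ rel t S :=
      ⟨hG, Set.nonempty_iff_ne_empty.mp ⟨x', hxt, hxG'⟩⟩
    have : x ∈ varS (rel s S) ∩ varS (rel t S) :=
      ⟨Set.mem_biUnion hGs hxG, Set.mem_biUnion hGt hxG⟩
    rw [hindep] at this
    exact this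
  -- now transfer sharing in θ to sharing in θ'
  ext y
  simp only [Set.mem_inter_iff, Set.mem_empty_iff_false, iff_false, not_and]
  intro hys hyt
  rw [hδ, apply_comp] at hys hyt
  obtain ⟨z, hzs, hyz⟩ := mem_vars_apply.mp hys
  obtain ⟨z', hzt, hyz'⟩ := mem_vars_apply.mp hyt
  -- for any such z: δ' y = var z
  have key : ∀ z : ℕ, z ∈ (θ'.apply s).vars ∪ (θ'.apply t).vars →
      y ∈ (δ z).vars → δ' y = Term.var z := by
    intro z hzst hyz
    have hfix : θ' z = Term.var z := by
      cases hzst with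
      | inl h => exact idem_fix hθ'id h
      | inr h => exact idem_fix hθ'id h
    have hθz : θ z = δ z := by
      have : θ z = Subst.comp δ θ' z := by rw [hδ]
      rw [this, Subst.comp, hfix]; rfl
    have hkey : δ'.apply (δ z) = Term.var z := by
      have : θ' z = Subst.comp δ' θ z := by rw [hδ']
      rw [hfix, Subst.comp, hθz] at this
      exact this.symm
    cases hdz : δ z with
    | var w =>
        rw [hdz] at hyz hkey
        simp only [Term.vars, Set.mem_singleton_iff] at hyz
        subst hyz
        exact hkey
    | app n f ts =>
        rw [hdz] at hkey
        simp only [Subst.apply] at hkey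
        exact absurd hkey (by simp)
  have h1 := key z (Or.inl hzs) hyz
  have h2 := key z' (Or.inr hzt) hyz'
  rw [h1] at h2
  injection h2 with hzz
  subst hzz
  exact stepA z hzs hzt

end SharingPaper
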